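/- Let Ω be a finite abelian group of order d endowed with a nondegenerate symmetric bicharacter ⟨·,·⟩, and let {φ_x : x∈Ω}, {ψ_y : y∈Ω} be two Fourier conjugate mutually unbiased bases of a d-dimensional complex Hilbert space H. Then −1 is not an eigenvalue of the Haagerup matrix Λ if and only if d is odd. -/

import Mathlib

open scoped InnerProductSpace
open Finset

set_option linter.unusedSectionVars false

noncomputable section

/-- Bundled hypotheses of a nondegenerate symmetric bicharacter. -/
structure HaagerupBichar {Ω : Type*} [Fintype Ω] [AddCommGroup Ω] (β : Ω → Ω → ℂ) : Prop where
  norm : ∀ x y, ‖β x y‖ = 1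
  symm : ∀ x y, β x y = β y x
  add : ∀ x₁ x₂ y, β (x₁ + x₂) y = β x₁ y * β x₂ y
  nondeg : ∀ x, (∀ y, β x y = 1) → x = 0

namespace HaagerupBichar

variable {Ω : Type*} [Fintype Ω] [DecidableEq Ω] [AddCommGroup Ω] {β : Ω → Ω → ℂ}
variable (hβ : HaagerupBichar β)
include hβ

lemma ne_zero (x y : Ω) : β x y ≠ 0 := by
  intro h
  have := hβ.norm x y
  rw [h] at this; simp at this

lemma add_right (x y₁ y₂ : Ω) : β x (y₁ + y₂) = β x y₁ * β x y₂ := by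
  rw [hβ.symm, hβ.add, hβ.symm y₁, hβ.symm y₂]

lemma zero_left (y : Ω) : β 0 y = 1 := by
  have h := hβ.add 0 0 y
  rw [add_zero] at h
  have := hβ.ne_zero 0 y
  field_simp at h
  tauto

lemma zero_right (x : Ω) : β x 0 = 1 := by rw [hβ.symm]; exact hβ.zero_left x

lemma neg_left (x y : Ω) : β (-x) y = (β x y)⁻¹ := by
  have h := hβ.add x (-x) y
  rw [add_neg_cancel, hβ.zero_left] at h
  field_simp [hβ.ne_zero x y]
  linear_combination -h

lemma neg_right (x y : Ω) : β x (-y) = (β x y)⁻¹ := by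
  rw [hβ.symm, hβ.neg_left, hβ.symm]

lemma sub_left (x₁ x₂ y : Ω) : β (x₁ - x₂) y = β x₁ y * (β x₂ y)⁻¹ := by
  rw [sub_eq_add_neg, hβ.add, hβ.neg_left]

lemma sub_right (x y₁ y₂ : Ω) : β x (y₁ - y₂) = β x y₁ * (β x y₂)⁻¹ := by
  rw [sub_eq_add_neg, hβ.add_right, hβ.neg_right]

lemma conj_eq (x y : Ω) : (starRingEnd ℂ) (β x y) = (β x y)⁻¹ := by
  rw [← Complex.inv_eq_conj (by exact hβ.norm x y)]

lemma inv_inv_eq (x y : Ω) : β (-x) (-y) = β x y := by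
  rw [hβ.neg_left, hβ.neg_right, inv_inv]

/-- Character sums. -/
lemma sum_right (a : Ω) : ∑ y, β a y = if a = 0 then (Fintype.card Ω : ℂ) else 0 := by
  by_cases h : a = 0
  · simp [h, hβ.zero_left]
  · simp only [h, if_false]
    obtain ⟨y₀, hy₀⟩ : ∃ y₀, β a y₀ ≠ 1 := by
      by_contra hc
      push_neg at hc
      exact h (hβ.nondeg a hc)
    have key : β a y₀ * ∑ y, β a y = ∑ y, β a y := by
      rw [Finset.mul_sum]
      calc ∑ y, β a y₀ * β a y = ∑ y, β a (y₀ + y) := by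
            refine Finset.sum_congr rfl fun y _ => ?_
            rw [hβ.add_right]
        _ = ∑ y, β a y := Equiv.sum_comp (Equiv.addLeft y₀) (fun y => β a y)
    have : (β a y₀ - 1) * ∑ y, β a y = 0 := by linear_combination key
    rcases mul_eq_zero.1 this with h1 | h2
    · exact absurd (by linear_combination h1) hy₀
    · exact h2

lemma pow_left (n : ℕ) (x y : Ω) : β (n • x) y = β x y ^ n := by
  induction n with
  | zero => simpa using hβ.zero_left y
  | succ n ih => rw [succ_nsmul, hβ.add, ih, pow_succ]

/-- First key sum. -/
lemma key1 (u v x y : Ω) :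
    ∑ q : Ω × Ω, β (x - q.1) (y - q.2) * (β u q.1 * β v q.2)
      = (Fintype.card Ω : ℂ) * ((β u v)⁻¹ * (β u x * β v y)) := by
  rw [Fintype.sum_prod_type]
  have step : ∀ z : Ω, ∑ t, β (x - z) (y - t) * (β u z * β v t)
      = if z = x - v then (β u z * β (x - z) y) * (Fintype.card Ω : ℂ) else 0 := by
    intro z
    have h1 : ∑ t, β (x - z) (y - t) * (β u z * β v t)
        = (β u z * β (x - z) y) * ∑ t, β (v - (x - z)) t := by
      rw [Finset.mul_sum]
      refine Finset.sum_congr rfl fun t _ => ?_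
      rw [hβ.sub_right (x - z) y t, hβ.sub_left v (x - z) t]
      ring
    rw [h1, hβ.sum_right]
    have hcond : (v - (x - z) = 0) ↔ z = x - v := by
      rw [sub_eq_zero, eq_sub_iff_add_eq, eq_sub_iff_add_eq, add_comm]
    simp only [hcond, mul_ite, mul_zero]
  rw [Finset.sum_congr rfl (fun z _ => step z), Finset.sum_ite_eq' Finset.univ (x - v) _]
  simp only [Finset.mem_univ, if_true]
  rw [sub_sub_cancel, hβ.sub_right u x v]
  ring

/-- Second key sum. -/
lemma key2 (u v x y : Ω) :
    ∑ q : Ω × Ω, (β (x - q.1) (y - q.2))⁻¹ * (β u q.1 * β v q.2)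
      = (Fintype.card Ω : ℂ) * (β u v * (β u x * β v y)) := by
  rw [Fintype.sum_prod_type]
  have step : ∀ z : Ω, ∑ t, (β (x - z) (y - t))⁻¹ * (β u z * β v t)
      = if z = x + v then (β u z * β (z - x) y) * (Fintype.card Ω : ℂ) else 0 := by
    intro z
    have h1 : ∑ t, (β (x - z) (y - t))⁻¹ * (β u z * β v t)
        = (β u z * β (z - x) y) * ∑ t, β (v - (z - x)) t := by
      rw [Finset.mul_sum]
      refine Finset.sum_congr rfl fun t _ => ?_
      rw [show (β (x - z) (y - t))⁻¹ = β (z - x) (y - t) by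
            rw [← hβ.neg_left, neg_sub],
          hβ.sub_right (z - x) y t, hβ.sub_left v (z - x) t]
      ring
    rw [h1, hβ.sum_right]
    have hcond : (v - (z - x) = 0) ↔ z = x + v := by
      rw [sub_eq_zero, eq_sub_iff_add_eq, eq_comm, add_comm]
    simp only [hcond, mul_ite, mul_zero]
  rw [Finset.sum_congr rfl (fun z _ => step z), Finset.sum_ite_eq' Finset.univ (x + v) _]
  simp only [Finset.mem_univ, if_true]
  rw [add_sub_cancel_left, hβ.add_right u x v]
  ring

end HaagerupBichar

/-- The Haagerup matrix of a pair of bases, with entries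
`Λ_{(x,y),(z,t)} = d·Re[⟨ψ_y, φ_z⟩⟨φ_z, ψ_t⟩⟨ψ_t, φ_x⟩⟨φ_x, ψ_y⟩]`. -/
def haagerup {Ω H : Type*} [NormedAddCommGroup H] [InnerProductSpace ℂ H]
    (d : ℕ) (φ ψ : Ω → H) : Matrix (Ω × Ω) (Ω × Ω) ℝ := fun p q =>
  (d : ℝ) * (⟪ψ p.2, φ q.1⟫_ℂ * ⟪φ q.1, ψ q.2⟫_ℂ * ⟪ψ q.2, φ p.1⟫_ℂ * ⟪φ p.1, ψ p.2⟫_ℂ).re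

theorem haagerup_no_negOne_eigenvalue_iff_odd
    {H : Type*} [NormedAddCommGroup H] [InnerProductSpace ℂ H] [FiniteDimensional ℂ H]
    {Ω : Type*} [Fintype Ω] [DecidableEq Ω] [AddCommGroup Ω]
    (d : ℕ) (hcard : Fintype.card Ω = d) (hdim : Module.finrank ℂ H = d)
    (β : Ω → Ω → ℂ)
    (hβnorm : ∀ x y, ‖β x y‖ = 1)
    (hβsymm : ∀ x y, β x y = β y x)
    (hβadd : ∀ x₁ x₂ y, β (x₁ + x₂) y = β x₁ y * β x₂ y)
    (hβnondeg : ∀ x, (∀ y, β x y = 1) → x = 0)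
    (φ ψ : OrthonormalBasis Ω ℂ H)
    (hFourier : ∀ x y : Ω, ⟪φ x, ψ y⟫_ℂ = (1 / Real.sqrt d : ℝ) * β x y) :
    (¬ Module.End.HasEigenvalue
        (Matrix.toLin' (haagerup d (fun x => φ x) (fun y => ψ y))) (-1)) ↔ Odd d := by
  have hβ : HaagerupBichar β := ⟨hβnorm, hβsymm, hβadd, hβnondeg⟩
  have hd : 0 < d := hcard ▸ Fintype.card_pos
  have hdR : (d : ℝ) ≠ 0 := Nat.cast_ne_zero.mpr hd.ne'
  have hdC : (d : ℂ) ≠ 0 := Nat.cast_ne_zero.mpr hd.ne'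
  set Λ := haagerup d (fun x => φ x) (fun y => ψ y) with hΛdef
  set s : ℝ := (Real.sqrt d)⁻¹ with hsdef
  -- inner products
  have e1 : ∀ x y : Ω, ⟪(φ x : H), (ψ y : H)⟫_ℂ = (s : ℂ) * β x y := by
    intro x y; rw [hFourier]; norm_num [hsdef]
  have e2 : ∀ x y : Ω, ⟪(ψ y : H), (φ x : H)⟫_ℂ = (s : ℂ) * (β x y)⁻¹ := by
    intro x y
    rw [← inner_conj_symm, e1, map_mul, Complex.conj_ofReal, hβ.conj_eq]
  have hs4 : (d : ℝ) * s ^ 4 = (d : ℝ)⁻¹ := by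
    have h2 : (Real.sqrt d) ^ 2 = (d : ℝ) := Real.sq_sqrt (by positivity)
    rw [hsdef, show ((Real.sqrt d)⁻¹) ^ 4 = (((Real.sqrt d) ^ 2) ^ 2)⁻¹ by ring, h2]
    field_simp
  -- entry formula
  have hentry : ∀ p q : Ω × Ω, Λ p q = (d : ℝ)⁻¹ * (β (p.1 - q.1) (p.2 - q.2)).re := by
    intro p q
    have hW : ((s : ℂ) * (β q.1 p.2)⁻¹) * ((s : ℂ) * β q.1 q.2) * ((s : ℂ) * (β p.1 q.2)⁻¹)
        * ((s : ℂ) * β p.1 p.2) = ((s ^ 4 : ℝ) : ℂ) * β (p.1 - q.1) (p.2 - q.2) := by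
      rw [hβ.sub_left, hβ.sub_right, hβ.sub_right]
      push_cast
      field_simp [hβ.ne_zero]
    have hrfl : Λ p q = (d : ℝ) * (⟪(ψ p.2 : H), φ q.1⟫_ℂ * ⟪(φ q.1 : H), ψ q.2⟫_ℂ
        * ⟪(ψ q.2 : H), φ p.1⟫_ℂ * ⟪(φ p.1 : H), ψ p.2⟫_ℂ).re := rfl
    rw [hrfl, e2 q.1 p.2, e1 q.1 q.2, e2 p.1 q.2, e1 p.1 p.2, hW, Complex.re_ofReal_mul,
      ← mul_assoc, hs4]
  -- symmetry of the matrix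
  have hsym : ∀ p q : Ω × Ω, Λ p q = Λ q p := by
    intro p q
    rw [hentry, hentry]
    have h : β (q.1 - p.1) (q.2 - p.2) = β (p.1 - q.1) (p.2 - q.2) := by
      rw [← neg_sub p.1 q.1, ← neg_sub p.2 q.2, hβ.inv_inv_eq]
    rw [h]
  -- eigen identity over ℂ
  have hkey : ∀ (u v : Ω) (p : Ω × Ω),
      ∑ q : Ω × Ω, (Λ p q : ℂ) * (β u q.1 * β v q.2)
        = (((β u v).re : ℝ) : ℂ) * (β u p.1 * β v p.2) := by
    intro u v p
    have hterm : ∀ q : Ω × Ω, ((Λ p q : ℝ) : ℂ) * (β u q.1 * β v q.2)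
        = ((d : ℂ)⁻¹ * (2 : ℂ)⁻¹) * (β (p.1 - q.1) (p.2 - q.2) * (β u q.1 * β v q.2)
            + (β (p.1 - q.1) (p.2 - q.2))⁻¹ * (β u q.1 * β v q.2)) := by
      intro q
      rw [hentry p q]
      have hre : (((β (p.1 - q.1) (p.2 - q.2)).re : ℝ) : ℂ)
          = (β (p.1 - q.1) (p.2 - q.2) + (β (p.1 - q.1) (p.2 - q.2))⁻¹) / 2 := by
        rw [← hβ.conj_eq, Complex.add_conj]; push_cast; ring
      push_cast
      rw [hre]; ring
    rw [Finset.sum_congr rfl fun q _ => hterm q, ← Finset.mul_sum, Finset.sum_add_distrib,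
      hβ.key1 u v p.1 p.2, hβ.key2 u v p.1 p.2, hcard]
    have hre2 : (((β u v).re : ℝ) : ℂ) = (β u v + (β u v)⁻¹) / 2 := by
      rw [← hβ.conj_eq, Complex.add_conj]; push_cast; ring
    rw [hre2]
    field_simp
    ring
  -- even d implies -1 is an eigenvalue
  have hEvenYes : Even d → Module.End.HasEigenvalue (Matrix.toLin' Λ) (-1) := by
    intro heven
    haveI : Fact (Nat.Prime 2) := ⟨Nat.prime_two⟩
    obtain ⟨u, hu⟩ := exists_prime_addOrderOf_dvd_card (G := Ω) 2
      (by rw [hcard]; exact heven.two_dvd)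
    have hu0 : u ≠ 0 := by
      intro h; rw [h, addOrderOf_zero] at hu; norm_num at hu
    have h2u : u + u = 0 := by
      have h := addOrderOf_nsmul_eq_zero u
      rw [hu, two_nsmul] at h; exact h
    have hsq : ∀ y, β u y * β u y = 1 := by
      intro y; rw [← hβ.add, h2u, hβ.zero_left]
    obtain ⟨v, hv⟩ : ∃ v, β u v ≠ 1 := by
      by_contra hcon; push_neg at hcon; exact hu0 (hβ.nondeg u hcon)
    have hβuv : β u v = -1 := (mul_self_eq_one_iff.mp (hsq v)).resolve_left hv
    set w : Ω × Ω → ℝ := fun p => (β u p.1 * β v p.2).re with hwdef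
    have hw00 : w (0, 0) = 1 := by simp [hwdef, hβ.zero_right]
    have hwne : w ≠ 0 := by
      intro h; rw [h] at hw00; simp at hw00
    have hmul : Λ.mulVec w = (-1 : ℝ) • w := by
      funext p
      have hstep : (Λ.mulVec w) p = (∑ q : Ω × Ω, (Λ p q : ℂ) * (β u q.1 * β v q.2)).re := by
        rw [Complex.re_sum]
        simp only [Matrix.mulVec, dotProduct]
        refine Finset.sum_congr rfl fun q _ => ?_
        rw [Complex.re_ofReal_mul]
      rw [Pi.smul_apply, hstep, hkey u v p, hβuv]
      simp only [hwdef, smul_eq_mul]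
      simp [Complex.mul_re]
    exact Module.End.hasEigenvalue_of_hasEigenvector
      ⟨Module.End.mem_eigenspace_iff.mpr (by rw [Matrix.toLin'_apply]; exact hmul), hwne⟩
  -- odd d implies -1 is not an eigenvalue
  have hOddNo : Odd d → ¬ Module.End.HasEigenvalue (Matrix.toLin' Λ) (-1) := by
    intro hodd heig
    obtain ⟨w, hw⟩ := heig.exists_hasEigenvector
    have hmul : Λ.mulVec w = -w := by
      have h := Module.End.mem_eigenspace_iff.mp hw.1
      rw [Matrix.toLin'_apply] at h
      simpa using h
    set c : Ω → Ω → ℂ := fun u v => ∑ p : Ω × Ω, (β u p.1 * β v p.2)⁻¹ * (w p : ℂ) with hc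
    -- claim A : Fourier coefficients are killed unless the eigenvalue matches
    have hA : ∀ u v : Ω, (((β u v).re : ℂ) + 1) * c u v = 0 := by
      intro u v
      have hT1 : ∑ p : Ω × Ω, (β u p.1 * β v p.2)⁻¹ * ((Λ.mulVec w) p : ℂ) = - c u v := by
        rw [hmul, hc]
        rw [← Finset.sum_neg_distrib]
        refine Finset.sum_congr rfl fun p _ => ?_
        simp
      have hT2 : ∑ p : Ω × Ω, (β u p.1 * β v p.2)⁻¹ * ((Λ.mulVec w) p : ℂ)
          = (((β u v).re : ℝ) : ℂ) * c u v := by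
        have expand : ∀ p : Ω × Ω, ((Λ.mulVec w) p : ℂ) = ∑ q : Ω × Ω, (Λ p q : ℂ) * (w q : ℂ) := by
          intro p
          simp only [Matrix.mulVec, dotProduct]
          push_cast
          rfl
        calc ∑ p : Ω × Ω, (β u p.1 * β v p.2)⁻¹ * ((Λ.mulVec w) p : ℂ)
            = ∑ p : Ω × Ω, ∑ q : Ω × Ω, (β u p.1 * β v p.2)⁻¹ * ((Λ p q : ℂ) * (w q : ℂ)) := by
              refine Finset.sum_congr rfl fun p _ => ?_
              rw [expand, Finset.mul_sum]
          _ = ∑ q : Ω × Ω, ∑ p : Ω × Ω, (β u p.1 * β v p.2)⁻¹ * ((Λ p q : ℂ) * (w q : ℂ)) :=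
              Finset.sum_comm
          _ = ∑ q : Ω × Ω, (w q : ℂ) * ∑ p : Ω × Ω, (Λ q p : ℂ) * (β (-u) p.1 * β (-v) p.2) := by
              refine Finset.sum_congr rfl fun q _ => ?_
              rw [Finset.mul_sum]
              refine Finset.sum_congr rfl fun p _ => ?_
              rw [hsym p q, hβ.neg_left, hβ.neg_left, mul_inv]
              ring
          _ = ∑ q : Ω × Ω, (w q : ℂ)
                * ((((β (-u) (-v)).re : ℝ) : ℂ) * (β (-u) q.1 * β (-v) q.2)) := by
              refine Finset.sum_congr rfl fun q _ => ?_
              rw [hkey (-u) (-v) q]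
          _ = (((β u v).re : ℝ) : ℂ) * c u v := by
              rw [hc, Finset.mul_sum]
              refine Finset.sum_congr rfl fun p _ => ?_
              rw [hβ.inv_inv_eq, hβ.neg_left, hβ.neg_left, mul_inv]
              ring
      linear_combination hT1 - hT2
    -- claim B : some Fourier coefficient is nonzero
    obtain ⟨p₀, hp₀⟩ : ∃ p₀, w p₀ ≠ 0 := by
      by_contra hcon; push_neg at hcon
      exact hw.2 (funext hcon)
    have hsum' : ∀ a : Ω, ∑ u : Ω, β u a = if a = 0 then (d : ℂ) else 0 := by
      intro a
      rw [show (∑ u : Ω, β u a) = ∑ u : Ω, β a u from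
        Finset.sum_congr rfl fun u _ => (hβ.symm u a), hβ.sum_right, hcard]
    obtain ⟨u, v, hcuv⟩ : ∃ u v : Ω, c u v ≠ 0 := by
      by_contra hcon; push_neg at hcon
      have hzero : ∑ u : Ω, ∑ v : Ω, (β u p₀.1 * β v p₀.2) * c u v = 0 := by
        simp [hcon]
      have heval : ∑ u : Ω, ∑ v : Ω, (β u p₀.1 * β v p₀.2) * c u v
          = (d : ℂ) * (d : ℂ) * (w p₀ : ℂ) := by
        calc ∑ u : Ω, ∑ v : Ω, (β u p₀.1 * β v p₀.2) * c u v
            = ∑ u : Ω, ∑ v : Ω, ∑ p : Ω × Ω,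
                (β u (p₀.1 - p.1) * β v (p₀.2 - p.2)) * (w p : ℂ) := by
              refine Finset.sum_congr rfl fun u _ => Finset.sum_congr rfl fun v _ => ?_
              rw [hc, Finset.mul_sum]
              refine Finset.sum_congr rfl fun p _ => ?_
              rw [hβ.sub_right u, hβ.sub_right v, mul_inv]
              ring
          _ = ∑ u : Ω, ∑ p : Ω × Ω, ∑ v : Ω,
                (β u (p₀.1 - p.1) * β v (p₀.2 - p.2)) * (w p : ℂ) :=
              Finset.sum_congr rfl fun u _ => Finset.sum_comm
          _ = ∑ p : Ω × Ω, ∑ u : Ω, ∑ v : Ω,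
                (β u (p₀.1 - p.1) * β v (p₀.2 - p.2)) * (w p : ℂ) :=
              Finset.sum_comm
          _ = ∑ p : Ω × Ω, (w p : ℂ)
                * ((∑ u : Ω, β u (p₀.1 - p.1)) * (∑ v : Ω, β v (p₀.2 - p.2))) := by
              refine Finset.sum_congr rfl fun p _ => ?_
              rw [Finset.sum_mul_sum, Finset.mul_sum]
              refine Finset.sum_congr rfl fun u _ => ?_
              rw [Finset.mul_sum]
              refine Finset.sum_congr rfl fun v _ => ?_
              ring
          _ = ∑ p : Ω × Ω, (if p = p₀ then (d : ℂ) * (d : ℂ) * (w p₀ : ℂ) else 0) := by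
              refine Finset.sum_congr rfl fun p _ => ?_
              rw [hsum', hsum']
              by_cases h1 : p = p₀
              · subst h1; simp [mul_comm]
              · rw [if_neg h1]
                have hne : p.1 ≠ p₀.1 ∨ p.2 ≠ p₀.2 := by
                  by_contra hcc; push_neg at hcc
                  exact h1 (Prod.ext hcc.1 hcc.2)
                rcases hne with h | h
                · have hcond : ¬ (p₀.1 - p.1 = 0) := by
                    rw [sub_eq_zero]; exact fun hh => h hh.symm
                  rw [if_neg hcond, zero_mul, mul_zero]
                · have hcond : ¬ (p₀.2 - p.2 = 0) := by
                    rw [sub_eq_zero]; exact fun hh => h hh.symm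
                  rw [if_neg hcond, mul_zero, mul_zero]
          _ = (d : ℂ) * (d : ℂ) * (w p₀ : ℂ) := by
              rw [Finset.sum_ite_eq' Finset.univ p₀ (fun _ => (d : ℂ) * (d : ℂ) * (w p₀ : ℂ)),
                if_pos (Finset.mem_univ p₀)]
      rw [heval] at hzero
      have : (w p₀ : ℂ) = 0 := by
        rcases mul_eq_zero.mp hzero with h | h
        · exact absurd h (mul_ne_zero hdC hdC)
        · exact h
      exact hp₀ (by exact_mod_cast this)
    have hre : ((β u v).re : ℂ) + 1 = 0 := by
      rcases mul_eq_zero.1 (hA u v) with h | h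
      · exact h
      · exact absurd h hcuv
    have hreR : (β u v).re = -1 := by
      have h : ((β u v).re : ℂ) = -1 := by linear_combination hre
      exact_mod_cast h
    have him : (β u v).im = 0 := by
      have hns : (β u v).re ^ 2 + (β u v).im ^ 2 = 1 := by
        have h1 := hβ.norm u v
        have h2 := Complex.sq_norm (β u v)
        rw [h1] at h2
        rw [Complex.normSq_apply] at h2
        nlinarith
      nlinarith [sq_nonneg ((β u v).im)]
    have hβuv : β u v = -1 := by
      apply Complex.ext <;> simp [hreR, him]
    have hpow : β u v ^ d = 1 := by
      rw [← hβ.pow_left d u v, ← hcard, card_nsmul_eq_zero, hβ.zero_left]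
    rw [hβuv, hodd.neg_one_pow] at hpow
    norm_num at hpow
  constructor
  · intro hno
    by_contra hodd'
    exact hno (hEvenYes (Nat.not_odd_iff_even.mp hodd'))
  · exact hOddNo
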